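/- Let λ be a primitive or non-trivial n-th root of unity (λ^n = 1, λ ≠ 1) with n ≥ 2, and define σ(w) = log((1−w)/(1−λw)) near w = 0. Then the coefficient a_{n−1} of w^{n−1} in the power series of τ(w) = σ(w)σ'(w) equals ∑_{j=1}^{n−1} (1/(n−j))(λ^{n−j} − 1)(λ^{j} − 1), and this coefficient is nonzero. -/

import Mathlib

theorem sigma_product_coefficient (n : ℕ) (hn : 2 ≤ n) (lam : ℂ)
    (hl : lam ^ n = 1) (hne : lam ≠ 1) :
    (PowerSeries.coeff (R := ℂ) (n - 1))
        ((PowerSeries.mk fun m => if m = 0 then 0 else (lam ^ m - 1) / m) *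
          (PowerSeries.mk fun m => lam ^ (m + 1) - 1))
      = ∑ j ∈ Finset.Icc 1 (n - 1), (1 / ((n : ℂ) - j)) * (lam ^ (n - j) - 1) * (lam ^ j - 1)
    ∧ (PowerSeries.coeff (R := ℂ) (n - 1))
        ((PowerSeries.mk fun m => if m = 0 then 0 else (lam ^ m - 1) / m) *
          (PowerSeries.mk fun m => lam ^ (m + 1) - 1)) ≠ 0 := by
  have hnorm : ‖lam‖ = 1 := Complex.norm_eq_one_of_pow_eq_one hl (by omega)
  have hconj : ∀ j ∈ Finset.Icc 1 (n - 1), lam ^ (n - j) = starRingEnd ℂ (lam ^ j) := by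
    intro j hj
    rw [Finset.mem_Icc] at hj
    have h1 : lam ^ j * lam ^ (n - j) = 1 := by
      rw [← pow_add, Nat.add_sub_cancel' (by omega)]; exact hl
    have h2 : lam ^ j * starRingEnd ℂ (lam ^ j) = 1 := by
      rw [Complex.mul_conj]
      norm_cast
      rw [Complex.normSq_eq_norm_sq, norm_pow, hnorm]
      norm_num
    have hz : lam ^ j ≠ 0 := by
      intro h; rw [h, zero_mul] at h1; exact zero_ne_one h1
    exact mul_left_cancel₀ hz (h1.trans h2.symm)
  have hcoeff : (PowerSeries.coeff (R := ℂ) (n - 1))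
        ((PowerSeries.mk fun m => if m = 0 then 0 else (lam ^ m - 1) / m) *
          (PowerSeries.mk fun m => lam ^ (m + 1) - 1))
      = ∑ j ∈ Finset.Icc 1 (n - 1), (1 / ((n : ℂ) - j)) * (lam ^ (n - j) - 1) * (lam ^ j - 1) := by
    rw [PowerSeries.coeff_mul]
    simp only [PowerSeries.coeff_mk]
    rw [Finset.Nat.sum_antidiagonal_eq_sum_range_succ
      (f := fun i k => (if i = 0 then 0 else (lam ^ i - 1) / (i : ℂ)) * (lam ^ (k + 1) - 1))]
    rw [show (n - 1).succ = n by omega]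
    rw [show (Finset.range n) = Finset.Icc 0 (n - 1) by
      rw [Finset.range_eq_Ico]; ext x; simp [Finset.mem_Ico, Finset.mem_Icc]; omega]
    rw [show Finset.Icc 0 (n - 1) = insert 0 (Finset.Icc 1 (n - 1)) by
      ext x; simp [Finset.mem_Icc, Finset.mem_insert]; omega]
    rw [Finset.sum_insert (by simp)]
    rw [if_pos rfl, zero_mul, zero_add]
    refine Finset.sum_nbij' (fun k => n - k) (fun j => n - j) ?_ ?_ ?_ ?_ ?_
    · intro a ha; beta_reduce; rw [Finset.mem_Icc] at ha ⊢; omega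
    · intro a ha; beta_reduce; rw [Finset.mem_Icc] at ha ⊢; omega
    · intro a ha; rw [Finset.mem_Icc] at ha; beta_reduce; omega
    · intro a ha; rw [Finset.mem_Icc] at ha; beta_reduce; omega
    · intro k hk
      beta_reduce
      rw [Finset.mem_Icc] at hk
      have h1 : k ≠ 0 := by omega
      rw [if_neg h1]
      have h2 : n - 1 - k + 1 = n - k := by omega
      have h3 : n - (n - k) = k := by omega
      rw [h2, h3]
      have h4 : ((n : ℂ) - (n - k : ℕ)) = (k : ℂ) := by
        rw [Nat.cast_sub (by omega : k ≤ n)]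
        ring
      rw [h4]
      ring
  refine ⟨hcoeff, ?_⟩
  rw [hcoeff]
  have hre : ∀ j ∈ Finset.Icc 1 (n - 1),
      (1 / ((n : ℂ) - j)) * (lam ^ (n - j) - 1) * (lam ^ j - 1)
        = ((1 / ((n : ℝ) - j)) * Complex.normSq (lam ^ j - 1) : ℝ) := by
    intro j hj
    rw [hconj j hj]
    have h5 : starRingEnd ℂ (lam ^ j) - 1 = starRingEnd ℂ (lam ^ j - 1) := by
      rw [map_sub, map_one]
    rw [mul_assoc, h5, ← Complex.normSq_eq_conj_mul_self]
    push_cast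
    ring
  rw [Finset.sum_congr rfl hre, ← Complex.ofReal_sum]
  rw [Ne, Complex.ofReal_eq_zero]
  have hpos : 0 < ∑ j ∈ Finset.Icc 1 (n - 1),
      (1 / ((n : ℝ) - j)) * Complex.normSq (lam ^ j - 1) := by
    apply Finset.sum_pos'
    · intro j hj
      rw [Finset.mem_Icc] at hj
      have hlt : (j : ℝ) < n := by exact_mod_cast (by omega : j < n)
      exact mul_nonneg (le_of_lt (div_pos one_pos (by linarith))) (Complex.normSq_nonneg _)
    · refine ⟨1, Finset.mem_Icc.mpr ⟨le_refl 1, by omega⟩, ?_⟩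
      have h1 : (1 : ℝ) < n := by exact_mod_cast (by omega : 1 < n)
      have h2 : 0 < Complex.normSq (lam ^ 1 - 1) := by
        rw [pow_one]; exact Complex.normSq_pos.mpr (sub_ne_zero.mpr hne)
      push_cast
      exact mul_pos (div_pos one_pos (by linarith)) h2
  exact ne_of_gt hpos
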